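/- arXiv:math/0304134 — 2 statements merged into one kernel-verified Lean document; each statement's English description precedes it below -/
import Mathlib

section
/- Let n ≥ 1, let f : ℝⁿ → ℝⁿ be continuous and satisfy ⟨f(y) − f(x), y − x⟩ ≤ C₄‖y−x‖ − C₂‖y−x‖² for all x, y ∈ ℝⁿ, for some constants C₂, C₄ > 0. Let T > 0, let b : [0,T] → ℝⁿ be continuous, and suppose x, y : [0,T] → ℝⁿ are continuous and satisfy x(t) = x₀ + b(t) + ∫₀^t f(x(s)) ds and y(t) = y₀ + b(t) + ∫₀^t f(y(s)) ds for all t ∈ [0,T] (the same forcing b for both). Then for all t ∈ [0,T]: ‖y(t) − x(t)‖ ≤ ‖y₀ − x₀‖ e^{−C₂ t} + (C₄/C₂)(1 − e^{−C₂ t}). -/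
open MeasureTheory Set
open scoped RealInnerProductSpace

/-- Gronwall estimate for two solutions driven by the same forcing: if
`⟨f(y)-f(x), y-x⟩ ≤ C₄‖y-x‖ - C₂‖y-x‖²` and `x, y` solve the integral equations
`x(t) = x₀ + b(t) + ∫₀ᵗ f(x(s)) ds`, `y(t) = y₀ + b(t) + ∫₀ᵗ f(y(s)) ds`, then
`‖y(t) - x(t)‖ ≤ ‖y₀ - x₀‖ e^{-C₂ t} + (C₄/C₂)(1 - e^{-C₂ t})` on `[0,T]`. -/
theorem stmt18 (n : ℕ) (hn : 1 ≤ n)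
    (f : EuclideanSpace ℝ (Fin n) → EuclideanSpace ℝ (Fin n)) (hf : Continuous f)
    (C₂ C₄ : ℝ) (hC₂ : 0 < C₂) (hC₄ : 0 < C₄)
    (hmono : ∀ x y : EuclideanSpace ℝ (Fin n),
      ⟪f y - f x, y - x⟫ ≤ C₄ * ‖y - x‖ - C₂ * ‖y - x‖ ^ 2)
    (T : ℝ) (hT : 0 < T)
    (b x y : ℝ → EuclideanSpace ℝ (Fin n)) (x₀ y₀ : EuclideanSpace ℝ (Fin n))
    (hb : ContinuousOn b (Set.Icc 0 T))
    (hx : ContinuousOn x (Set.Icc 0 T))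
    (hy : ContinuousOn y (Set.Icc 0 T))
    (hxeq : ∀ t ∈ Set.Icc (0 : ℝ) T, x t = x₀ + b t + ∫ s in (0 : ℝ)..t, f (x s))
    (hyeq : ∀ t ∈ Set.Icc (0 : ℝ) T, y t = y₀ + b t + ∫ s in (0 : ℝ)..t, f (y s)) :
    ∀ t ∈ Set.Icc (0 : ℝ) T,
      ‖y t - x t‖ ≤ ‖y₀ - x₀‖ * Real.exp (-C₂ * t) +
        (C₄ / C₂) * (1 - Real.exp (-C₂ * t)) := by
  set g : ℝ → EuclideanSpace ℝ (Fin n) := fun t => y t - x t with hg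
  -- FTC derivative of the integral terms
  have hFx : ContinuousOn (fun s => f (x s)) (Set.Icc 0 T) := hf.comp_continuousOn hx
  have hFy : ContinuousOn (fun s => f (y s)) (Set.Icc 0 T) := hf.comp_continuousOn hy
  have hint : ∀ (w : ℝ → EuclideanSpace ℝ (Fin n)),
      ContinuousOn (fun s => f (w s)) (Set.Icc 0 T) →
      ∀ u ∈ Set.Icc (0:ℝ) T,
      HasDerivWithinAt (fun v => ∫ s in (0:ℝ)..v, f (w s)) (f (w u)) (Set.Icc 0 T) u := by
    intro w hw u hu
    haveI : Fact (u ∈ Set.Icc (0:ℝ) T) := ⟨hu⟩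
    apply intervalIntegral.integral_hasDerivWithinAt_right
      (t := Set.Icc (0:ℝ) T)
    · apply ContinuousOn.intervalIntegrable
      apply hw.mono
      rw [Set.uIcc_of_le hu.1]
      exact Set.Icc_subset_Icc le_rfl hu.2
    · exact hw.stronglyMeasurableAtFilter_nhdsWithin measurableSet_Icc u
    · exact hw u hu
  have hgder : ∀ t ∈ Set.Icc (0:ℝ) T,
      HasDerivWithinAt g (f (y t) - f (x t)) (Set.Icc 0 T) t := by
    intro t ht
    have h1 := (((hint y hFy t ht).sub (hint x hFx t ht)).const_add (y₀ - x₀))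
    apply h1.congr
    · intro u hu
      rw [hg]; simp only [Pi.sub_apply]
      rw [hxeq u hu, hyeq u hu]; abel
    · rw [hg]; simp only [Pi.sub_apply]
      rw [hxeq t ht, hyeq t ht]; abel
  have hgcont : ContinuousOn (fun t => ‖g t‖) (Set.Icc 0 T) :=
    (hy.sub hx).norm
  have hg0 : ‖g 0‖ ≤ ‖y₀ - x₀‖ := by
    have h0 : (0:ℝ) ∈ Set.Icc (0:ℝ) T := ⟨le_rfl, hT.le⟩
    have : g 0 = y₀ - x₀ := by
      rw [hg]; simp only
      rw [hxeq 0 h0, hyeq 0 h0, intervalIntegral.integral_same,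
        intervalIntegral.integral_same]; abel
    rw [this]
  -- the Dini derivative condition
  have hdini : ∀ t ∈ Set.Ico (0:ℝ) T, ∀ r : ℝ, -C₂ * ‖g t‖ + C₄ < r →
      ∃ᶠ z in nhdsWithin t (Set.Ioi t), (z - t)⁻¹ * (‖g z‖ - ‖g t‖) < r := by
    intro t ht r hr
    have htT : t < T := ht.2
    have htIcc : t ∈ Set.Icc (0:ℝ) T := ⟨ht.1, htT.le⟩
    have hsne : (nhdsWithin t (Set.Ioc t T)).NeBot := by
      have hcl : t ∈ closure (Set.Ioc t T) := by
        rw [closure_Ioc htT.ne]; exact ⟨le_rfl, htT.le⟩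
      exact mem_closure_iff_nhdsWithin_neBot.1 hcl
    have hsub : Set.Ioc t T ⊆ Set.Icc 0 T := fun z hz => ⟨ht.1.trans hz.1.le, hz.2⟩
    have hmem : t ∉ Set.Ioc t T := fun h => lt_irrefl t h.1
    have hle : nhdsWithin t (Set.Ioc t T) ≤ nhdsWithin t (Set.Ioi t) :=
      nhdsWithin_mono t Set.Ioc_subset_Ioi_self
    suffices hev : ∀ᶠ z in nhdsWithin t (Set.Ioc t T),
        (z - t)⁻¹ * (‖g z‖ - ‖g t‖) < r by
      exact (hev.frequently).filter_mono hle
    by_cases hzero : g t = 0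
    · -- then y t = x t so the derivative is 0
      have hyx : y t = x t := by
        have := hzero; rw [hg] at this; simpa [sub_eq_zero] using this
      have hd0 : HasDerivWithinAt g 0 (Set.Ioc t T) t := by
        have := (hgder t htIcc).mono hsub
        rwa [hyx, sub_self] at this
      have hrpos : 0 < r := by
        have h0n : ‖g t‖ = 0 := by rw [hzero, norm_zero]
        rw [h0n] at hr; linarith
      have := hd0.limsup_norm_slope_le (by simpa using hrpos)
      have h2 : nhdsWithin t (Set.Ioc t T) ≤ nhdsWithin t (Set.Ioc t T) := le_rfl
      filter_upwards [this, self_mem_nhdsWithin] with z hz hzmem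
      have hzt : t < z := hzmem.1
      have h3 : (z - t)⁻¹ * (‖g z‖ - ‖g t‖) ≤ ‖z - t‖⁻¹ * ‖g z - g t‖ := by
        rw [Real.norm_eq_abs, abs_of_pos (sub_pos.2 hzt)]
        apply mul_le_mul_of_nonneg_left (norm_sub_norm_le _ _)
        exact inv_nonneg.2 (by linarith)
      exact h3.trans_lt hz
    · -- differentiable case for the norm
      have hnpos : 0 < ‖g t‖ := norm_pos_iff.2 hzero
      have hsq : HasDerivWithinAt (fun z => ‖g z‖ ^ 2)
          (2 * (inner ℝ (g t) (f (y t) - f (x t)) : ℝ)) (Set.Ioc t T) t :=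
        ((hgder t htIcc).mono hsub).norm_sq
      have hsqrt := (Real.hasDerivAt_sqrt (pow_pos hnpos 2).ne').comp_hasDerivWithinAt
        t hsq
      have heq : (fun z => Real.sqrt (‖g z‖ ^ 2)) = fun z => ‖g z‖ := by
        funext z; rw [Real.sqrt_sq (norm_nonneg _)]
      rw [show (Real.sqrt ∘ fun z => ‖g z‖ ^ 2) = fun z => Real.sqrt (‖g z‖ ^ 2) from rfl,
        heq] at hsqrt
      set d : ℝ := 1 / (2 * Real.sqrt (‖g t‖ ^ 2)) * (2 * (inner ℝ (g t) (f (y t) - f (x t)) : ℝ))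
        with hd
      have hdlt : d < r := by
        have hinner : (inner ℝ (g t) (f (y t) - f (x t)) : ℝ) ≤ C₄ * ‖g t‖ - C₂ * ‖g t‖ ^ 2 := by
          have := hmono (x t) (y t)
          rw [real_inner_comm]
          exact this
        have hsq' : Real.sqrt (‖g t‖ ^ 2) = ‖g t‖ := Real.sqrt_sq (norm_nonneg _)
        rw [hd, hsq']
        have h1 : 1 / (2 * ‖g t‖) * (2 * (inner ℝ (g t) (f (y t) - f (x t)) : ℝ))
            = (inner ℝ (g t) (f (y t) - f (x t)) : ℝ) / ‖g t‖ := by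
          field_simp
        rw [h1]
        have h2 : (inner ℝ (g t) (f (y t) - f (x t)) : ℝ) / ‖g t‖ ≤ -C₂ * ‖g t‖ + C₄ := by
          rw [div_le_iff₀ hnpos]
          nlinarith
        exact h2.trans_lt hr
      have := hsqrt.limsup_slope_le' hmem hdlt
      filter_upwards [this] with z hz
      rwa [slope_def_field, div_eq_inv_mul] at hz
  -- apply Gronwall
  intro t ht
  have key := le_gronwallBound_of_liminf_deriv_right_le (f := fun t => ‖g t‖)
    (f' := fun t => -C₂ * ‖g t‖ + C₄) (δ := ‖y₀ - x₀‖) (K := -C₂) (ε := C₄)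
    hgcont hdini hg0 (fun u _ => le_rfl) t ht
  rw [gronwallBound_of_K_ne_0 (by linarith : -C₂ ≠ 0)] at key
  simp only [sub_zero] at key
  calc ‖y t - x t‖ = ‖g t‖ := rfl
    _ ≤ ‖y₀ - x₀‖ * Real.exp (-C₂ * t) + C₄ / (-C₂) * (Real.exp (-C₂ * t) - 1) := key
    _ = ‖y₀ - x₀‖ * Real.exp (-C₂ * t) + (C₄ / C₂) * (1 - Real.exp (-C₂ * t)) := by
        rw [div_neg]; ring
end

section
/- Let n ≥ 1, let f : ℝⁿ → ℝⁿ be continuous and satisfy the one-sided Lipschitz condition ⟨f(a) − f(b), a − b⟩ ≤ C₃‖a−b‖² for all a, b ∈ ℝⁿ with some constant C₃ > 0, and let κ₂ > 0. Let T > 0, let x : [0,T] → ℝⁿ be continuous, and suppose ρ : [0,T] → ℝⁿ is continuous and satisfies ρ(t) = ρ₀ + ∫₀^t [ f(x(s) + ρ(s)) − f(x(s)) − C₃ ρ(s) − κ₂ ρ(s)/√‖ρ(s)‖ ] ds for all t ∈ [0,T], where the term ρ(s)/√‖ρ(s)‖ is interpreted as 0 when ρ(s) = 0. Then ‖ρ(t)‖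 ≤ (√‖ρ₀‖ − κ₂ t/2)² for all t ∈ [0, T] with t ≤ 2√‖ρ₀‖/κ₂, and ρ(t) = 0 for all t ∈ [0,T] with t ≥ 2√‖ρ₀‖/κ₂. -/
open MeasureTheory Set
open scoped RealInnerProductSpace

private lemma rpow_half_aux {E : Type*} [NormedAddCommGroup E] [NormedSpace ℝ E] :
    Continuous fun y : E => (‖y‖ ^ (-(1 : ℝ) / 2)) • y := by
  rw [continuous_iff_continuousAt]
  intro y
  rcases eq_or_ne y 0 with rfl | hy
  · have h0 : (fun y : E => (‖y‖ ^ (-(1 : ℝ) / 2)) • y) 0 = 0 := by simp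
    unfold ContinuousAt
    rw [h0]
    apply squeeze_zero_norm (a := fun z : E => ‖z‖ ^ ((1 : ℝ) / 2))
    · intro z
      rcases eq_or_ne z 0 with rfl | hz
      · simp [Real.zero_rpow]
      · have hz' : (0 : ℝ) < ‖z‖ := norm_pos_iff.mpr hz
        rw [norm_smul, Real.norm_eq_abs,
          abs_of_nonneg (Real.rpow_nonneg (norm_nonneg z) _)]
        have : ‖z‖ ^ ((1 : ℝ) / 2) = ‖z‖ ^ (-(1 : ℝ) / 2) * ‖z‖ := by
          rw [← Real.rpow_add_one hz'.ne' (-(1 : ℝ) / 2)]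
          norm_num
        rw [this]
    · have h1 : ContinuousAt (fun r : ℝ => r ^ ((1 : ℝ) / 2)) ‖(0 : E)‖ := by
        simpa using Real.continuousAt_rpow_const 0 ((1 : ℝ) / 2) (Or.inr (by norm_num))
      have h2 : Filter.Tendsto (fun z : E => ‖z‖ ^ ((1 : ℝ) / 2)) (nhds 0)
          (nhds (‖(0 : E)‖ ^ ((1 : ℝ) / 2))) :=
        h1.comp (continuous_norm.tendsto (0 : E))
      simpa [Real.zero_rpow] using h2
  · have h1 : ContinuousAt (fun z : E => ‖z‖ ^ (-(1 : ℝ) / 2)) y := by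
      have := (Real.continuousAt_rpow_const ‖y‖ (-(1 : ℝ) / 2)
        (Or.inl (norm_pos_iff.mpr hy).ne')).comp continuous_norm.continuousAt (x := y)
      exact this
    exact h1.smul continuousAt_id

private lemma rpow_mul_sq_aux {r : ℝ} (hr : 0 ≤ r) :
    r ^ (-(1 : ℝ) / 2) * r ^ 2 = r ^ ((3 : ℝ) / 2) := by
  rcases eq_or_lt_of_le hr with h | h
  · rw [← h]
    rw [Real.zero_rpow (by norm_num), Real.zero_rpow (by norm_num)]
    ring
  · rw [← Real.rpow_natCast r 2, ← Real.rpow_add h]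
    norm_num

/-- The binding construction estimate: if `ρ` solves
`ρ(t) = ρ₀ + ∫₀ᵗ [f(x(s)+ρ(s)) - f(x(s)) - C₃ ρ(s) - κ₂ ρ(s)/√‖ρ(s)‖] ds`
(with `ρ/√‖ρ‖ := 0` when `ρ = 0`, which is automatic for `‖ρ‖^{-1/2} := 0^{-1/2} = 0`),
then `‖ρ(t)‖ ≤ (√‖ρ₀‖ - κ₂ t/2)²` for `t ≤ 2√‖ρ₀‖/κ₂` and `ρ(t) = 0` for
`t ≥ 2√‖ρ₀‖/κ₂`. -/
theorem stmt19 (n : ℕ) (hn : 1 ≤ n)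
    (f : EuclideanSpace ℝ (Fin n) → EuclideanSpace ℝ (Fin n)) (hf : Continuous f)
    (C₃ κ₂ : ℝ) (hC₃ : 0 < C₃) (hκ₂ : 0 < κ₂)
    (hOS : ∀ a b : EuclideanSpace ℝ (Fin n), ⟪f a - f b, a - b⟫ ≤ C₃ * ‖a - b‖ ^ 2)
    (T : ℝ) (hT : 0 < T)
    (x ρ : ℝ → EuclideanSpace ℝ (Fin n)) (ρ₀ : EuclideanSpace ℝ (Fin n))
    (hx : ContinuousOn x (Set.Icc 0 T))
    (hρ : ContinuousOn ρ (Set.Icc 0 T))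
    (hρeq : ∀ t ∈ Set.Icc (0 : ℝ) T,
      ρ t = ρ₀ + ∫ s in (0 : ℝ)..t,
        (f (x s + ρ s) - f (x s) - C₃ • ρ s - (κ₂ * ‖ρ s‖ ^ (-(1 : ℝ) / 2)) • ρ s)) :
    ∀ t ∈ Set.Icc (0 : ℝ) T,
      (t ≤ 2 * Real.sqrt ‖ρ₀‖ / κ₂ →
        ‖ρ t‖ ≤ (Real.sqrt ‖ρ₀‖ - κ₂ * t / 2) ^ 2) ∧
      (2 * Real.sqrt ‖ρ₀‖ / κ₂ ≤ t → ρ t = 0) := by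
  have hT0 : (0 : ℝ) ≤ T := hT.le
  -- continuous extensions of x and ρ to all of ℝ
  set xc : ℝ → EuclideanSpace ℝ (Fin n) :=
    fun t => x ((projIcc 0 T hT0 t : Icc (0 : ℝ) T) : ℝ) with hxc_def
  set ρc : ℝ → EuclideanSpace ℝ (Fin n) :=
    fun t => ρ ((projIcc 0 T hT0 t : Icc (0 : ℝ) T) : ℝ) with hρc_def
  have hproj_cont : Continuous fun t : ℝ => ((projIcc 0 T hT0 t : Icc (0 : ℝ) T) : ℝ) :=
    continuous_subtype_val.comp continuous_projIcc
  have hmem : ∀ t : ℝ, ((projIcc 0 T hT0 t : Icc (0 : ℝ) T) : ℝ) ∈ Icc (0 : ℝ) T :=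
    fun t => (projIcc 0 T hT0 t).2
  have hxc_cont : Continuous xc := hx.comp_continuous hproj_cont hmem
  have hρc_cont : Continuous ρc := hρ.comp_continuous hproj_cont hmem
  have hxc_eq : ∀ t ∈ Icc (0 : ℝ) T, xc t = x t := by
    intro t ht; simp only [hxc_def, projIcc_of_mem hT0 ht]
  have hρc_eq : ∀ t ∈ Icc (0 : ℝ) T, ρc t = ρ t := by
    intro t ht; simp only [hρc_def, projIcc_of_mem hT0 ht]
  -- the (extended) integrand
  set g : ℝ → EuclideanSpace ℝ (Fin n) :=
    fun t => f (xc t + ρc t) - f (xc t) - C₃ • ρc t -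
      (κ₂ * ‖ρc t‖ ^ (-(1 : ℝ) / 2)) • ρc t with hg_def
  have hg_cont : Continuous g := by
    have h4 : Continuous fun t => (κ₂ * ‖ρc t‖ ^ (-(1 : ℝ) / 2)) • ρc t := by
      have heq : (fun t => (κ₂ * ‖ρc t‖ ^ (-(1 : ℝ) / 2)) • ρc t) =
          fun t => κ₂ • ((‖ρc t‖ ^ (-(1 : ℝ) / 2)) • ρc t) := by
        funext t; rw [mul_smul]
      rw [heq]
      exact (rpow_half_aux.comp hρc_cont).const_smul κ₂
    exact (((hf.comp (hxc_cont.add hρc_cont)).sub (hf.comp hxc_cont)).sub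
      (hρc_cont.const_smul C₃)).sub h4
  -- ρ agrees with the FTC primitive of g on [0,T]
  have hρF : ∀ t ∈ Icc (0 : ℝ) T, ρ t = ρ₀ + ∫ s in (0 : ℝ)..t, g s := by
    intro t ht
    rw [hρeq t ht]
    congr 1
    apply intervalIntegral.integral_congr
    intro s hs
    have hs' : s ∈ Icc (0 : ℝ) T := by
      rw [uIcc_of_le ht.1] at hs
      exact ⟨hs.1, hs.2.trans ht.2⟩
    simp only [hg_def, hxc_eq s hs', hρc_eq s hs']
  have hρ0 : ρ 0 = ρ₀ := by
    have := hρeq 0 ⟨le_refl 0, hT0⟩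
    simpa using this
  -- right derivative of ρ on [0,T)
  have hρ_deriv : ∀ t ∈ Ico (0 : ℝ) T, HasDerivWithinAt ρ (g t) (Ici t) t := by
    intro t ht
    have hF : HasDerivAt (fun u => ρ₀ + ∫ s in (0 : ℝ)..u, g s) (g t) t :=
      (intervalIntegral.integral_hasDerivAt_right (hg_cont.intervalIntegrable _ _)
        (hg_cont.stronglyMeasurableAtFilter _ _) hg_cont.continuousAt).const_add ρ₀
    have h1 : HasDerivWithinAt ρ (g t) (Icc 0 T) t :=
      hF.hasDerivWithinAt.congr (fun s hs => hρF s hs) (hρF t ⟨ht.1, ht.2.le⟩)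
    exact h1.mono_of_mem_nhdsWithin (Icc_mem_nhdsGE_of_mem ht)
  -- φ = ‖ρ‖², its right derivative D
  set φ : ℝ → ℝ := fun t => ⟪ρ t, ρ t⟫ with hφ_def
  set D : ℝ → ℝ := fun t => ⟪ρ t, g t⟫ + ⟪g t, ρ t⟫ with hD_def
  have hφ_norm : ∀ t, φ t = ‖ρ t‖ ^ 2 := fun t => real_inner_self_eq_norm_sq _
  have hφ_deriv : ∀ t ∈ Ico (0 : ℝ) T, HasDerivWithinAt φ (D t) (Ici t) t :=
    fun t ht => HasDerivWithinAt.inner ℝ (hρ_deriv t ht) (hρ_deriv t ht)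
  have hφ_cont : ContinuousOn φ (Icc 0 T) := hρ.inner hρ
  -- the key differential inequality
  have hD_le : ∀ t ∈ Icc (0 : ℝ) T,
      D t ≤ -(2 * κ₂) * ‖ρ t‖ ^ ((3 : ℝ) / 2) := by
    intro t ht
    have hgt : g t = f (x t + ρ t) - f (x t) - C₃ • ρ t -
        (κ₂ * ‖ρ t‖ ^ (-(1 : ℝ) / 2)) • ρ t := by
      simp only [hg_def, hxc_eq t ht, hρc_eq t ht]
    have hinner : ⟪ρ t, g t⟫ ≤ -κ₂ * ‖ρ t‖ ^ ((3 : ℝ) / 2) := by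
      rw [hgt, inner_sub_right, inner_sub_right, real_inner_smul_right,
        real_inner_smul_right]
      have hOS' : ⟪ρ t, f (x t + ρ t) - f (x t)⟫ ≤ C₃ * ‖ρ t‖ ^ 2 := by
        have := hOS (x t + ρ t) (x t)
        rw [add_sub_cancel_left] at this
        rwa [real_inner_comm]
      have hself : ⟪ρ t, ρ t⟫ = ‖ρ t‖ ^ 2 := real_inner_self_eq_norm_sq _
      rw [hself]
      have hr : κ₂ * ‖ρ t‖ ^ (-(1 : ℝ) / 2) * ‖ρ t‖ ^ 2 =
          κ₂ * ‖ρ t‖ ^ ((3 : ℝ) / 2) := by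
        rw [mul_assoc, rpow_mul_sq_aux (norm_nonneg _)]
      rw [hr]
      linarith
    have hDeq : D t = 2 * ⟪ρ t, g t⟫ := by
      simp only [hD_def]; rw [real_inner_comm (g t) (ρ t)]; ring
    rw [hDeq]
    linarith
  -- notation
  set c : ℝ := Real.sqrt ‖ρ₀‖ with hc_def
  have hc0 : 0 ≤ c := Real.sqrt_nonneg _
  have hcsq : c ^ 2 = ‖ρ₀‖ := by rw [hc_def]; exact Real.sq_sqrt (norm_nonneg _)
  set ts : ℝ := 2 * c / κ₂ with hts_def
  have hts0 : 0 ≤ ts := div_nonneg (by linarith) hκ₂.le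
  have hkts : κ₂ * ts / 2 = c := by
    field_simp [hts_def]
    rw [hts_def]; field_simp
  set b : ℝ := min ts T with hb_def
  have hb0 : 0 ≤ b := le_min hts0 hT0
  have hbT : b ≤ T := min_le_right _ _
  have hφ0 : φ 0 = c ^ 4 := by
    rw [hφ_norm, hρ0, ← hcsq]; ring
  have hnorm32 : ∀ t, ‖ρ t‖ ^ ((3 : ℝ) / 2) = (‖ρ t‖ ^ 2) ^ ((3 : ℝ) / 4) := by
    intro t
    rw [← Real.rpow_natCast ‖ρ t‖ 2, ← Real.rpow_mul (norm_nonneg _)]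
    norm_num
  have hy34 : ∀ y : ℝ, 0 ≤ y → (y ^ 4) ^ ((3 : ℝ) / 4) = y ^ 3 := by
    intro y hy
    rw [← Real.rpow_natCast y 4, ← Real.rpow_mul hy,
      show ((4 : ℕ) : ℝ) * (3 / 4) = ((3 : ℕ) : ℝ) by norm_num,
      Real.rpow_natCast]
  -- Claim A
  have claimA : ∀ t ∈ Icc (0 : ℝ) b, φ t ≤ (c - κ₂ * t / 2) ^ 4 := by
    have key : ∀ ε : ℝ, 0 < ε → ∀ t ∈ Icc (0 : ℝ) b,
        φ t ≤ (c - κ₂ * t / 2) ^ 4 + ε * t := by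
      intro ε hε
      have hBd : ∀ s : ℝ, HasDerivAt (fun t => (c - κ₂ * t / 2) ^ 4 + ε * t)
          (-(2 * κ₂) * (c - κ₂ * s / 2) ^ 3 + ε) s := by
        intro s
        have hL : HasDerivAt (fun t : ℝ => c - κ₂ * t / 2) (-(κ₂ / 2)) s := by
          simpa using (((hasDerivAt_id s).const_mul κ₂).div_const 2).const_sub c
        have h2 := (hL.pow 4).add ((hasDerivAt_id s).const_mul ε)
        have h3 : ((4 : ℕ) : ℝ) * (c - κ₂ * s / 2) ^ (4 - 1) * -(κ₂ / 2) + ε * 1 =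
            -(2 * κ₂) * (c - κ₂ * s / 2) ^ 3 + ε := by
          norm_num; ring
        rw [h3] at h2
        exact h2
      refine image_le_of_deriv_right_lt_deriv_boundary (f' := D)
        (B := fun t => (c - κ₂ * t / 2) ^ 4 + ε * t)
        (B' := fun t => -(2 * κ₂) * (c - κ₂ * t / 2) ^ 3 + ε)
        ?_ ?_ ?_ hBd ?_
      · exact hφ_cont.mono (Icc_subset_Icc le_rfl hbT)
      · intro s hs
        exact hφ_deriv s ⟨hs.1, lt_of_lt_of_le hs.2 hbT⟩
      · rw [hφ0]; norm_num
      · intro s hs hφs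
        have hsT : s ∈ Icc (0 : ℝ) T := ⟨hs.1, hs.2.le.trans hbT⟩
        have hsts : s < ts := lt_of_lt_of_le hs.2 (min_le_left _ _)
        have hy : 0 < c - κ₂ * s / 2 := by
          have h5 : κ₂ * s / 2 < κ₂ * ts / 2 := by
            apply div_lt_div_of_pos_right _ (by norm_num)
            exact mul_lt_mul_of_pos_left hsts hκ₂
          rw [hkts] at h5
          linarith
        have h1 : (c - κ₂ * s / 2) ^ 4 ≤ ‖ρ s‖ ^ 2 := by
          rw [← hφ_norm, hφs]
          have : 0 ≤ ε * s := mul_nonneg hε.le hs.1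
          linarith
        have h2 : (c - κ₂ * s / 2) ^ 3 ≤ ‖ρ s‖ ^ ((3 : ℝ) / 2) := by
          rw [hnorm32, ← hy34 _ hy.le]
          exact Real.rpow_le_rpow (by positivity) h1 (by norm_num)
        have h3 : D s ≤ -(2 * κ₂) * ‖ρ s‖ ^ ((3 : ℝ) / 2) := hD_le s hsT
        have h4 : -(2 * κ₂) * ‖ρ s‖ ^ ((3 : ℝ) / 2) ≤
            -(2 * κ₂) * (c - κ₂ * s / 2) ^ 3 := by
          apply mul_le_mul_of_nonpos_left h2
          linarith
        linarith
    intro t ht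
    apply le_of_forall_pos_le_add
    intro ε hε
    have hε' : 0 < ε / (T + 1) := by positivity
    have hkey := key (ε / (T + 1)) hε' t ht
    have htle : t ≤ T := ht.2.trans hbT
    have hfrac : ε / (T + 1) * t ≤ ε := by
      rw [div_mul_eq_mul_div, div_le_iff₀ (by linarith)]
      nlinarith [ht.1]
    linarith
  -- Claim B
  have claimB : ts ≤ T → ∀ t ∈ Icc ts T, φ t ≤ 0 := by
    intro htsT
    have hbts : b = ts := min_eq_left htsT
    have hφts : φ ts ≤ 0 := by
      have h1 := claimA ts ⟨hts0, le_of_eq hbts.symm⟩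
      rw [hkts] at h1
      simpa using h1
    refine image_le_of_deriv_right_le_deriv_boundary (f' := D)
      (B := fun _ => (0 : ℝ)) (B' := fun _ => (0 : ℝ)) ?_ ?_ hφts ?_ ?_ ?_
    · exact hφ_cont.mono (Icc_subset_Icc hts0 le_rfl)
    · intro s hs
      exact hφ_deriv s ⟨hts0.trans hs.1, hs.2⟩
    · exact continuousOn_const
    · intro s _; exact (hasDerivAt_const s (0 : ℝ)).hasDerivWithinAt
    · intro s hs
      show D s ≤ 0
      have h1 := hD_le s ⟨hts0.trans hs.1, hs.2.le⟩
      have hpos : 0 ≤ 2 * κ₂ * ‖ρ s‖ ^ ((3 : ℝ) / 2) := by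
        have := Real.rpow_nonneg (norm_nonneg (ρ s)) ((3 : ℝ) / 2)
        positivity
      have h6 : -(2 * κ₂) * ‖ρ s‖ ^ ((3 : ℝ) / 2) =
          -(2 * κ₂ * ‖ρ s‖ ^ ((3 : ℝ) / 2)) := by ring
      rw [h6] at h1
      exact h1.trans (neg_nonpos.mpr hpos)
  -- conclude
  intro t ht
  constructor
  · intro hle
    have htb : t ∈ Icc (0 : ℝ) b := ⟨ht.1, le_min hle ht.2⟩
    have h1 : ‖ρ t‖ ^ 2 ≤ (c - κ₂ * t / 2) ^ 4 := by
      rw [← hφ_norm]; exact claimA t htb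
    have hy : 0 ≤ c - κ₂ * t / 2 := by
      have h5 : κ₂ * t / 2 ≤ κ₂ * ts / 2 := by
        apply div_le_div_of_nonneg_right _ (by norm_num)
        exact mul_le_mul_of_nonneg_left hle hκ₂.le
      rw [hkts] at h5
      linarith
    have h2 : ‖ρ t‖ ^ 2 ≤ ((c - κ₂ * t / 2) ^ 2) ^ 2 := by
      rw [← pow_mul]; exact h1
    calc ‖ρ t‖ = Real.sqrt (‖ρ t‖ ^ 2) := (Real.sqrt_sq (norm_nonneg _)).symm
      _ ≤ Real.sqrt (((c - κ₂ * t / 2) ^ 2) ^ 2) := Real.sqrt_le_sqrt h2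
      _ = (c - κ₂ * t / 2) ^ 2 := Real.sqrt_sq (by positivity)
  · intro hge
    have htsT : ts ≤ T := hge.trans ht.2
    have h1 := claimB htsT t ⟨hge, ht.2⟩
    rw [hφ_norm] at h1
    have h2 : ‖ρ t‖ ^ 2 = 0 := le_antisymm h1 (by positivity)
    exact norm_eq_zero.mp (pow_eq_zero_iff two_ne_zero |>.mp h2)
end
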